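/- If a bounded geometry metric space X has property A, then every ghost operator in the uniform Roe algebra C*_u(X) is compact. -/

import Mathlib

/-!
Formalization of statements from "Ghostbusting and property A" (Roe–Willett).
`L2 X` is ℓ²(X) with complex coefficients, `diracDelta x` the Dirac basis vector δ_x,
`matrixEntry T x y = ⟨δ_x, T δ_y⟩`.
-/

noncomputable section

open Metric Set

/-- ℓ²(X) with complex coefficients. -/
abbrev L2 (X : Type*) := lp (fun _ : X => ℂ) 2

/-- The Dirac mass δ_x ∈ ℓ²(X). -/
def diracDelta {X : Type*} (x : X) : L2 X :=
  letI := Classical.decEq X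
  lp.single 2 x 1

/-- The matrix entry T_{xy} = ⟨δ_x, T δ_y⟩ of a bounded operator on ℓ²(X). -/
def matrixEntry {X : Type*} (T : L2 X →L[ℂ] L2 X) (x y : X) : ℂ :=
  inner ℂ (diracDelta x) (T (diracDelta y))

/-- A metric space has bounded geometry if for each `R > 0` there is a uniform
bound on the cardinality of all balls of radius `R`. -/
def BoundedGeometry (X : Type*) [MetricSpace X] : Prop :=
  ∀ R : ℝ, 0 < R → ∃ N : ℕ, ∀ x : X,
    (Metric.closedBall x R).Finite ∧ (Metric.closedBall x R).ncard ≤ N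

/-- `T` has propagation at most `R`: the matrix entries vanish whenever `d(x,y) > R`.
(`T ∈ ℂ_R[X]` in the notation of the paper.) -/
def HasPropagationLE {X : Type*} [MetricSpace X] (T : L2 X →L[ℂ] L2 X) (R : ℝ) : Prop :=
  ∀ x y : X, R < dist x y → matrixEntry T x y = 0

/-- The uniform Roe algebra C*_u(X): the operator-norm closure of the set of
finite propagation operators. -/
def UniformRoeAlgebra (X : Type*) [MetricSpace X] : Set (L2 X →L[ℂ] L2 X) :=
  closure {T | ∃ R : ℝ, 0 ≤ R ∧ HasPropagationLE T R}

/-- `T` is a ghost: its matrix entries tend to 0 at infinity, i.e. for every `ε > 0`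
all entries with at least one index outside some finite set have modulus `< ε`. -/
def IsGhost {X : Type*} [MetricSpace X] (T : L2 X →L[ℂ] L2 X) : Prop :=
  ∀ ε : ℝ, 0 < ε → ∃ F : Finset X, ∀ x y : X, (x ∉ F ∨ y ∉ F) → ‖matrixEntry T x y‖ < ε

/-- A positive definite kernel on `X × X`. -/
def IsPosDefKernel {X : Type*} (k : X → X → ℝ) : Prop :=
  ∀ (s : Finset X) (c : X → ℝ), 0 ≤ ∑ x ∈ s, ∑ y ∈ s, c x * c y * k x y

/-- Property A, in the formulation via positive definite kernels:
there is a sequence of positive definite kernels of controlled support converging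
to 1 uniformly on controlled sets. -/
def PropertyA (X : Type*) [MetricSpace X] : Prop :=
  ∃ k : ℕ → X → X → ℝ,
    (∀ n, IsPosDefKernel (k n)) ∧
    (∀ n, ∃ r : ℝ, ∀ x y : X, r < dist x y → k n x y = 0) ∧
    (∀ s : ℝ, 0 < s → ∀ ε : ℝ, 0 < ε → ∃ N : ℕ, ∀ n : ℕ, N < n → ∀ x y : X,
      dist x y < s → 1 - ε ≤ k n x y ∧ k n x y ≤ 1)

namespace GhostAux

open scoped ENNReal

variable {X : Type*}

local notation "⟪" x ", " y "⟫" => @inner ℂ _ _ x y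

lemma inner_dirac (f : L2 X) (x : X) : ⟪diracDelta x, f⟫ = f x := by
  classical
  rw [diracDelta, lp.inner_single_left]
  simp [RCLike.inner_apply]

lemma matrixEntry_eq (T : L2 X →L[ℂ] L2 X) (x y : X) :
    matrixEntry T x y = (T (diracDelta y)) x := by
  rw [matrixEntry, inner_dirac]

lemma norm_dirac (x : X) : ‖(diracDelta x : L2 X)‖ = 1 := by
  classical
  rw [diracDelta]
  have := lp.norm_single (p := 2) (E := fun _ : X => ℂ) (by norm_num) x (1:ℂ)
  simpa using this

lemma norm_matrixEntry_le (T : L2 X →L[ℂ] L2 X) (x y : X) :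
    ‖matrixEntry T x y‖ ≤ ‖T‖ := by
  calc ‖matrixEntry T x y‖ ≤ ‖(diracDelta x : L2 X)‖ * ‖T (diracDelta y)‖ :=
        norm_inner_le_norm _ _
    _ ≤ ‖(diracDelta x : L2 X)‖ * (‖T‖ * ‖(diracDelta y : L2 X)‖) := by
        gcongr; exact T.le_opNorm _
    _ = ‖T‖ := by rw [norm_dirac, norm_dirac]; ring

lemma matrixEntry_sub (T S : L2 X →L[ℂ] L2 X) (x y : X) :
    matrixEntry (T - S) x y = matrixEntry T x y - matrixEntry S x y := by
  rw [matrixEntry, matrixEntry, matrixEntry, ContinuousLinearMap.sub_apply,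
    inner_sub_right]

/-- A finitely supported vector in ℓ². -/
def fin2 (s : Finset X) (u : X → ℂ) : L2 X :=
  letI := Classical.decEq X
  ∑ x ∈ s, lp.single 2 x (u x)

lemma fin2_apply_mem {s : Finset X} {u : X → ℂ} {z : X} (hz : z ∈ s) :
    (fin2 s u) z = u z := by
  classical
  rw [fin2, lp.coeFn_sum, Finset.sum_apply]
  rw [Finset.sum_eq_single z]
  · simp [lp.single_apply_self]
  · intro b _ hb
    exact lp.single_apply_ne 2 b _ (Ne.symm hb)
  · exact fun h => absurd hz h

lemma fin2_apply_not_mem {s : Finset X} {u : X → ℂ} {z : X} (hz : z ∉ s) :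
    (fin2 s u) z = 0 := by
  classical
  rw [fin2, lp.coeFn_sum, Finset.sum_apply]
  refine Finset.sum_eq_zero fun b hb => ?_
  exact lp.single_apply_ne 2 b _ (fun h => hz (h ▸ hb))

lemma norm_fin2 (s : Finset X) (u : X → ℂ) :
    ‖fin2 s u‖ = Real.sqrt (∑ x ∈ s, ‖u x‖ ^ 2) := by
  classical
  have h := lp.norm_sum_single (p := 2) (E := fun _ : X => ℂ) (by norm_num) u s
  have h2 : (2 : ℝ≥0∞).toReal = (2:ℝ) := by norm_num
  rw [h2] at h
  have key : ‖fin2 s u‖ ^ (2:ℝ) = ∑ x ∈ s, ‖u x‖ ^ (2:ℝ) := by rw [fin2]; exact h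
  have hrw : ∀ y : ℝ, 0 ≤ y → y ^ (2:ℝ) = y ^ 2 := by
    intro y hy
    rw [show (2:ℝ) = ((2:ℕ):ℝ) by norm_num, Real.rpow_natCast]
  rw [hrw _ (norm_nonneg _)] at key
  rw [Finset.sum_congr rfl (fun x _ => hrw _ (norm_nonneg (u x)))] at key
  rw [← key, Real.sqrt_sq (norm_nonneg _)]

lemma inner_fin2_left (s : Finset X) (u : X → ℂ) (g : L2 X) :
    ⟪fin2 s u, g⟫ = ∑ x ∈ s, (starRingEnd ℂ) (u x) * g x := by
  classical
  rw [fin2, sum_inner]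
  refine Finset.sum_congr rfl fun x hx => ?_
  rw [lp.inner_single_left]
  simp [RCLike.inner_apply]
  ring

lemma fin2_eq_sum_smul (s : Finset X) (u : X → ℂ) :
    fin2 s u = ∑ x ∈ s, u x • diracDelta x := by
  letI := Classical.decEq X
  rw [fin2]
  refine Finset.sum_congr rfl fun y _ => ?_
  rw [diracDelta, ← lp.single_smul, smul_eq_mul, mul_one]

lemma apply_fin2 (T : L2 X →L[ℂ] L2 X) (t : Finset X) (v : X → ℂ) (x : X) :
    (T (fin2 t v)) x = ∑ y ∈ t, matrixEntry T x y * v y := by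
  rw [fin2_eq_sum_smul, map_sum]
  rw [lp.coeFn_sum, Finset.sum_apply]
  refine Finset.sum_congr rfl fun y _ => ?_
  rw [map_smul, lp.coeFn_smul, Pi.smul_apply, matrixEntry_eq, smul_eq_mul]
  ring

lemma inner_fin2_T (T : L2 X →L[ℂ] L2 X) (s t : Finset X) (u v : X → ℂ) :
    ⟪fin2 s u, T (fin2 t v)⟫
      = ∑ x ∈ s, ∑ y ∈ t, (starRingEnd ℂ) (u x) * matrixEntry T x y * v y := by
  rw [inner_fin2_left]
  refine Finset.sum_congr rfl fun x _ => ?_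
  rw [apply_fin2, Finset.mul_sum]
  refine Finset.sum_congr rfl fun y _ => ?_
  ring

lemma norm_le_of_forms (T : L2 X →L[ℂ] L2 X) {M : ℝ} (hM : 0 ≤ M)
    (h : ∀ (s t : Finset X) (u v : X → ℂ),
      ‖⟪fin2 s u, T (fin2 t v)⟫‖ ≤ M * ‖fin2 s u‖ * ‖fin2 t v‖) : ‖T‖ ≤ M := by
  classical
  have hrw : ∀ y : ℝ, 0 ≤ y → y ^ (2:ℝ≥0∞).toReal = y ^ 2 := by
    intro y hy
    rw [show (2:ℝ≥0∞).toReal = ((2:ℕ):ℝ) by norm_num, Real.rpow_natCast]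
  have step1 : ∀ (t : Finset X) (v : X → ℂ), ‖T (fin2 t v)‖ ≤ M * ‖fin2 t v‖ := by
    intro t v
    set g : L2 X := T (fin2 t v) with hg
    set C : ℝ := M * ‖fin2 t v‖ with hC
    have hC0 : 0 ≤ C := mul_nonneg hM (norm_nonneg _)
    refine lp.norm_le_of_forall_sum_le (by norm_num) hC0 fun s => ?_
    rw [hrw _ hC0, Finset.sum_congr rfl (fun x _ => hrw _ (norm_nonneg (g x)))]
    set A : ℝ := ∑ x ∈ s, ‖g x‖ ^ 2 with hA
    have hA0 : 0 ≤ A := Finset.sum_nonneg fun x _ => sq_nonneg _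
    have hform : ‖⟪fin2 s (fun x => g x), g⟫‖ = A := by
      rw [inner_fin2_left]
      have : ∀ x ∈ s, (starRingEnd ℂ) (g x) * g x = ((‖g x‖ ^ 2 : ℝ) : ℂ) := by
        intro x _
        rw [RCLike.conj_mul]
        norm_cast
      rw [Finset.sum_congr rfl this, ← Complex.ofReal_sum, Complex.norm_real,
        Real.norm_of_nonneg hA0]
    have hb := h s t (fun x => g x) v
    rw [hform, norm_fin2] at hb
    have hb' : Real.sqrt A * Real.sqrt A ≤ C * Real.sqrt A := by
      rw [Real.mul_self_sqrt hA0]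
      calc A ≤ M * Real.sqrt (∑ x ∈ s, ‖g x‖ ^ 2) * ‖fin2 t v‖ := hb
        _ = C * Real.sqrt A := by rw [hA, hC]; ring
    rcases eq_or_lt_of_le (Real.sqrt_nonneg A) with hz | hz
    · have hA' : A = 0 := by
        have h1 : A ≤ 0 := Real.sqrt_eq_zero'.mp hz.symm
        linarith
      rw [hA']
      positivity
    · have hle : Real.sqrt A ≤ C := le_of_mul_le_mul_right hb' hz
      nlinarith [Real.sq_sqrt hA0, Real.sqrt_nonneg A]
  refine T.opNorm_le_bound hM fun f => ?_
  letI := Classical.decEq X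
  have hs : HasSum (fun x => lp.single 2 x (f x)) f :=
    lp.hasSum_single (by norm_num) f
  have htt : Filter.Tendsto (fun s : Finset X => ∑ x ∈ s, lp.single 2 x (f x))
      Filter.atTop (nhds f) := hs
  have h1 : Filter.Tendsto (fun s : Finset X => ‖T (∑ x ∈ s, lp.single 2 x (f x))‖)
      Filter.atTop (nhds ‖T f‖) :=
    ((T.continuous.tendsto f).comp htt).norm
  have h2 : Filter.Tendsto (fun s : Finset X => M * ‖∑ x ∈ s, lp.single 2 x (f x)‖)
      Filter.atTop (nhds (M * ‖f‖)) := (htt.norm).const_mul M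
  refine le_of_tendsto_of_tendsto' h1 h2 fun s => ?_
  have heq : (∑ x ∈ s, lp.single 2 x (f x)) = fin2 s (fun x => f x) := by
    rw [fin2]
  rw [heq]
  exact step1 s _

section MetricPart

variable [MetricSpace X]

lemma card_filter_ball_le {r : ℝ} {N : ℕ} {z : X}
    (hfin : (Metric.closedBall z r).Finite) (hcard : (Metric.closedBall z r).ncard ≤ N)
    (w : Finset X) [DecidablePred fun y => dist z y ≤ r] :
    (w.filter (fun y => dist z y ≤ r)).card ≤ N := by
  classical
  have hsub : w.filter (fun y => dist z y ≤ r) ⊆ hfin.toFinset := by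
    intro y hy
    rw [Set.Finite.mem_toFinset, Metric.mem_closedBall, dist_comm]
    exact (Finset.mem_filter.mp hy).2
  calc (w.filter (fun y => dist z y ≤ r)).card ≤ hfin.toFinset.card :=
        Finset.card_le_card hsub
    _ = (Metric.closedBall z r).ncard := (Set.ncard_eq_toFinset_card _ hfin).symm
    _ ≤ N := hcard

lemma key_sum_bound {r : ℝ} {N : ℕ}
    (hN : ∀ z : X, ∃ _ : (Metric.closedBall z r).Finite,
      (Metric.closedBall z r).ncard ≤ N)
    {c : ℝ} (hc : 0 ≤ c) (m : X → X → ℂ) (s t : Finset X) (u v : X → ℂ)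
    (hm0 : ∀ x ∈ s, ∀ y ∈ t, r < dist x y → m x y = 0)
    (hmc : ∀ x ∈ s, ∀ y ∈ t, dist x y ≤ r → ‖m x y‖ ≤ c) :
    ‖∑ x ∈ s, ∑ y ∈ t, (starRingEnd ℂ) (u x) * m x y * v y‖
      ≤ N * c * (Real.sqrt (∑ x ∈ s, ‖u x‖ ^ 2) * Real.sqrt (∑ y ∈ t, ‖v y‖ ^ 2)) := by
  classical
  set P : Finset (X × X) := (s ×ˢ t).filter (fun p => dist p.1 p.2 ≤ r) with hP
  have hsum : ∑ x ∈ s, ∑ y ∈ t, (starRingEnd ℂ) (u x) * m x y * v y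
      = ∑ p ∈ P, (starRingEnd ℂ) (u p.1) * m p.1 p.2 * v p.2 := by
    rw [hP, Finset.sum_filter, Finset.sum_product]
    refine Finset.sum_congr rfl fun x hx => Finset.sum_congr rfl fun y hy => ?_
    by_cases hd : dist x y ≤ r
    · rw [if_pos hd]
    · rw [if_neg hd, hm0 x hx y hy (not_le.mp hd), mul_zero, zero_mul]
  rw [hsum]
  calc ‖∑ p ∈ P, (starRingEnd ℂ) (u p.1) * m p.1 p.2 * v p.2‖
      ≤ ∑ p ∈ P, ‖(starRingEnd ℂ) (u p.1) * m p.1 p.2 * v p.2‖ := norm_sum_le _ _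
    _ ≤ ∑ p ∈ P, (Real.sqrt c * ‖u p.1‖) * (Real.sqrt c * ‖v p.2‖) := by
        refine Finset.sum_le_sum fun p hp => ?_
        have hp' := Finset.mem_filter.mp hp
        have hxy := Finset.mem_product.mp hp'.1
        have hmb : ‖m p.1 p.2‖ ≤ c := hmc _ hxy.1 _ hxy.2 hp'.2
        rw [norm_mul, norm_mul, RingHomIsometric.norm_map]
        calc ‖u p.1‖ * ‖m p.1 p.2‖ * ‖v p.2‖ ≤ ‖u p.1‖ * c * ‖v p.2‖ := by
              gcongr
          _ = (Real.sqrt c * ‖u p.1‖) * (Real.sqrt c * ‖v p.2‖) := by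
              rw [show Real.sqrt c * ‖u p.1‖ * (Real.sqrt c * ‖v p.2‖)
                  = (Real.sqrt c * Real.sqrt c) * (‖u p.1‖ * ‖v p.2‖) by ring,
                Real.mul_self_sqrt hc]; ring
    _ ≤ Real.sqrt (∑ p ∈ P, (Real.sqrt c * ‖u p.1‖) ^ 2)
        * Real.sqrt (∑ p ∈ P, (Real.sqrt c * ‖v p.2‖) ^ 2) :=
        Real.sum_mul_le_sqrt_mul_sqrt _ _ _
    _ ≤ Real.sqrt (c * (N * ∑ x ∈ s, ‖u x‖ ^ 2))
        * Real.sqrt (c * (N * ∑ y ∈ t, ‖v y‖ ^ 2)) := by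
        gcongr Real.sqrt ?_ * Real.sqrt ?_
        · have heq : ∑ p ∈ P, (Real.sqrt c * ‖u p.1‖) ^ 2
              = ∑ x ∈ s, ((t.filter (fun y => dist x y ≤ r)).card : ℝ)
                  * (c * ‖u x‖ ^ 2) := by
            rw [hP, Finset.sum_filter, Finset.sum_product]
            refine Finset.sum_congr rfl fun x hx => ?_
            simp only
            rw [← Finset.sum_filter, Finset.sum_const, nsmul_eq_mul, mul_pow,
              Real.sq_sqrt hc]
          rw [heq]
          calc ∑ x ∈ s, ((t.filter (fun y => dist x y ≤ r)).card : ℝ) * (c * ‖u x‖ ^ 2)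
              ≤ ∑ x ∈ s, (N : ℝ) * (c * ‖u x‖ ^ 2) := by
                refine Finset.sum_le_sum fun x hx => ?_
                obtain ⟨hfin, hcard⟩ := hN x
                have hcards := card_filter_ball_le hfin hcard t (z := x)
                have hle : ((t.filter (fun y => dist x y ≤ r)).card : ℝ) ≤ N := by
                  exact_mod_cast hcards
                have h0 : 0 ≤ c * ‖u x‖ ^ 2 := by positivity
                exact mul_le_mul_of_nonneg_right hle h0
            _ = c * ((N:ℝ) * ∑ x ∈ s, ‖u x‖ ^ 2) := by
                rw [Finset.mul_sum, Finset.mul_sum]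
                exact Finset.sum_congr rfl fun _ _ => by ring
        · have heq : ∑ p ∈ P, (Real.sqrt c * ‖v p.2‖) ^ 2
              = ∑ y ∈ t, ((s.filter (fun x => dist x y ≤ r)).card : ℝ)
                  * (c * ‖v y‖ ^ 2) := by
            rw [hP, Finset.sum_filter, Finset.sum_product]
            rw [Finset.sum_comm]
            refine Finset.sum_congr rfl fun y hy => ?_
            simp only
            rw [← Finset.sum_filter, Finset.sum_const, nsmul_eq_mul, mul_pow,
              Real.sq_sqrt hc]
          rw [heq]
          calc ∑ y ∈ t, ((s.filter (fun x => dist x y ≤ r)).card : ℝ) * (c * ‖v y‖ ^ 2)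
              ≤ ∑ y ∈ t, (N : ℝ) * (c * ‖v y‖ ^ 2) := by
                refine Finset.sum_le_sum fun y hy => ?_
                obtain ⟨hfin, hcard⟩ := hN y
                have hsub : s.filter (fun x => dist x y ≤ r)
                    ⊆ s.filter (fun x => dist y x ≤ r) := by
                  intro x hx
                  rw [Finset.mem_filter] at *
                  exact ⟨hx.1, by rw [dist_comm]; exact hx.2⟩
                have hcards := (Finset.card_le_card hsub).trans
                  (card_filter_ball_le hfin hcard s (z := y))
                have hle : ((s.filter (fun x => dist x y ≤ r)).card : ℝ) ≤ N := by
                  exact_mod_cast hcards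
                have h0 : 0 ≤ c * ‖v y‖ ^ 2 := by positivity
                exact mul_le_mul_of_nonneg_right hle h0
            _ = c * ((N:ℝ) * ∑ y ∈ t, ‖v y‖ ^ 2) := by
                rw [Finset.mul_sum, Finset.mul_sum]
                exact Finset.sum_congr rfl fun _ _ => by ring
    _ = N * c * (Real.sqrt (∑ x ∈ s, ‖u x‖ ^ 2) * Real.sqrt (∑ y ∈ t, ‖v y‖ ^ 2)) := by
        have hcN : (0:ℝ) ≤ c * N := by positivity
        rw [show c * ((N:ℝ) * ∑ x ∈ s, ‖u x‖^2) = (c * N) * ∑ x ∈ s, ‖u x‖^2 by ring,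
          show c * ((N:ℝ) * ∑ y ∈ t, ‖v y‖^2) = (c * N) * ∑ y ∈ t, ‖v y‖^2 by ring,
          Real.sqrt_mul hcN, Real.sqrt_mul hcN]
        rw [show Real.sqrt (c*N) * Real.sqrt (∑ x ∈ s, ‖u x‖^2)
            * (Real.sqrt (c*N) * Real.sqrt (∑ y ∈ t, ‖v y‖^2))
            = (Real.sqrt (c*N) * Real.sqrt (c*N))
              * (Real.sqrt (∑ x ∈ s, ‖u x‖^2) * Real.sqrt (∑ y ∈ t, ‖v y‖^2)) by ring,
          Real.mul_self_sqrt hcN]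
        ring

end MetricPart

lemma gram_bound (k : X → X → ℝ) (hpd : IsPosDefKernel k)
    (hsym : ∀ x y, k x y = k y x) (hdiag : ∀ x, k x x ≤ 1)
    (E : L2 X →L[ℂ] L2 X) (F : Finset X) (u v : X → ℂ) :
    ‖∑ x ∈ F, ∑ y ∈ F, (starRingEnd ℂ) (u x) * ((k x y : ℝ) : ℂ) * matrixEntry E x y * v y‖
      ≤ ‖E‖ * (Real.sqrt (∑ x ∈ F, ‖u x‖ ^ 2) * Real.sqrt (∑ y ∈ F, ‖v y‖ ^ 2)) := by
  classical
  set n := {x // x ∈ F}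
  set K : Matrix n n ℝ := Matrix.of fun i j => k i j with hKdef
  have hK : K.PosSemidef := by
    refine Matrix.posSemidef_iff_dotProduct_mulVec.mpr ⟨?_, ?_⟩
    · ext i j
      simp only [Matrix.conjTranspose_apply, hKdef, Matrix.of_apply, star_trivial]
      exact hsym _ _
    · intro w
      set c : X → ℝ := fun x => if h : x ∈ F then w ⟨x, h⟩ else 0 with hc
      have h0 := hpd F c
      have hconv : ∑ x ∈ F, ∑ y ∈ F, c x * c y * k x y
          = dotProduct (star w) (K.mulVec w) := by
        rw [← Finset.sum_coe_sort F]
        simp only [dotProduct, Matrix.mulVec, Pi.star_apply, star_trivial]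
        refine Finset.sum_congr rfl fun i _ => ?_
        rw [← Finset.sum_coe_sort F (fun y => c ↑i * c y * k ↑i y)]
        rw [Finset.mul_sum]
        refine Finset.sum_congr rfl fun j _ => ?_
        have hci : c ↑i = w i := by rw [hc]; simp [i.2]
        have hcj : c ↑j = w j := by rw [hc]; simp [j.2]
        rw [hci, hcj, hKdef]
        simp only [Matrix.of_apply]
        ring
      rw [← hconv]
      exact h0
  obtain ⟨B, hB⟩ : ∃ B : Matrix n n ℝ, K = B.conjTranspose * B := by
    open MatrixOrder in
    obtain ⟨X', hX', -, hXX⟩ := CFC.exists_sqrt_of_isSelfAdjoint_of_quasispectrumRestricts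
      hK.isHermitian (QuasispectrumRestricts.nnreal_of_nonneg hK.nonneg)
    refine ⟨X', ?_⟩
    rw [← Matrix.star_eq_conjTranspose, hX'.star_eq]
    exact hXX.symm
  set b : n → X → ℝ := fun i x => if h : x ∈ F then B i ⟨x, h⟩ else 0 with hb
  have hfact : ∀ x ∈ F, ∀ y ∈ F, k x y = ∑ i : n, b i x * b i y := by
    intro x hx y hy
    have hxy : K ⟨x, hx⟩ ⟨y, hy⟩ = ∑ i : n, B i ⟨x, hx⟩ * B i ⟨y, hy⟩ := by
      rw [hB, Matrix.mul_apply]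
      refine Finset.sum_congr rfl fun i _ => ?_
      rw [Matrix.conjTranspose_apply, star_trivial]
    rw [hKdef] at hxy
    simp only [Matrix.of_apply] at hxy
    rw [hxy]
    refine Finset.sum_congr rfl fun i _ => ?_
    rw [hb]; simp [hx, hy]
  have hdiagb : ∀ x ∈ F, ∑ i : n, (b i x) ^ 2 ≤ 1 := by
    intro x hx
    have hfx := hfact x hx x hx
    calc ∑ i : n, (b i x) ^ 2 = ∑ i : n, b i x * b i x :=
          Finset.sum_congr rfl fun i _ => sq (b i x) ▸ by ring
      _ = k x x := hfx.symm
      _ ≤ 1 := hdiag x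
  set U : n → L2 X := fun i => fin2 F (fun x => ((b i x : ℝ) : ℂ) * u x) with hU
  set V : n → L2 X := fun i => fin2 F (fun y => ((b i y : ℝ) : ℂ) * v y) with hV
  have hswap : ∀ i : n, ⟪U i, E (V i)⟫ = ∑ x ∈ F, ∑ y ∈ F,
      ((b i x : ℝ) : ℂ) * ((b i y : ℝ) : ℂ)
        * ((starRingEnd ℂ) (u x) * matrixEntry E x y * v y) := by
    intro i
    rw [hU, hV, inner_fin2_T]
    refine Finset.sum_congr rfl fun x _ => Finset.sum_congr rfl fun y _ => ?_
    rw [map_mul, Complex.conj_ofReal]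
    ring
  have hmain : ∑ i : n, ⟪U i, E (V i)⟫ = ∑ x ∈ F, ∑ y ∈ F,
        (starRingEnd ℂ) (u x) * ((k x y : ℝ) : ℂ) * matrixEntry E x y * v y := by
    rw [Finset.sum_congr rfl (fun i (_ : i ∈ Finset.univ) => hswap i)]
    rw [Finset.sum_comm]
    refine Finset.sum_congr rfl fun x hx => ?_
    rw [Finset.sum_comm]
    refine Finset.sum_congr rfl fun y hy => ?_
    have hk : ((k x y : ℝ) : ℂ) = ∑ i : n, ((b i x : ℝ):ℂ) * ((b i y : ℝ):ℂ) := by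
      rw [hfact x hx y hy]
      push_cast
      rfl
    calc ∑ i : n, ((b i x:ℝ):ℂ) * ((b i y:ℝ):ℂ)
          * ((starRingEnd ℂ) (u x) * matrixEntry E x y * v y)
        = (∑ i : n, ((b i x:ℝ):ℂ) * ((b i y:ℝ):ℂ))
          * ((starRingEnd ℂ) (u x) * matrixEntry E x y * v y) := by
          rw [Finset.sum_mul]
      _ = (starRingEnd ℂ) (u x) * ((k x y : ℝ):ℂ) * matrixEntry E x y * v y := by
          rw [← hk]; ring
  rw [← hmain]
  have hUnorm : ∑ i : n, ‖U i‖ ^ 2 ≤ ∑ x ∈ F, ‖u x‖ ^ 2 := by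
    have h1 : ∀ i : n, ‖U i‖ ^ 2 = ∑ x ∈ F, (b i x) ^ 2 * ‖u x‖ ^ 2 := by
      intro i
      rw [hU]
      simp only
      rw [norm_fin2, Real.sq_sqrt (Finset.sum_nonneg fun x _ => sq_nonneg _)]
      refine Finset.sum_congr rfl fun x _ => ?_
      rw [norm_mul, Complex.norm_real, mul_pow, Real.norm_eq_abs, sq_abs]
    rw [Finset.sum_congr rfl (fun i (_ : i ∈ Finset.univ) => h1 i), Finset.sum_comm]
    refine Finset.sum_le_sum fun x hx => ?_
    calc ∑ i : n, (b i x) ^ 2 * ‖u x‖ ^ 2 = (∑ i : n, (b i x) ^ 2) * ‖u x‖ ^ 2 :=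
          (Finset.sum_mul _ _ _).symm
      _ ≤ 1 * ‖u x‖ ^ 2 := mul_le_mul_of_nonneg_right (hdiagb x hx) (sq_nonneg _)
      _ = ‖u x‖ ^ 2 := one_mul _
  have hVnorm : ∑ i : n, ‖V i‖ ^ 2 ≤ ∑ y ∈ F, ‖v y‖ ^ 2 := by
    have h1 : ∀ i : n, ‖V i‖ ^ 2 = ∑ y ∈ F, (b i y) ^ 2 * ‖v y‖ ^ 2 := by
      intro i
      rw [hV]
      simp only
      rw [norm_fin2, Real.sq_sqrt (Finset.sum_nonneg fun y _ => sq_nonneg _)]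
      refine Finset.sum_congr rfl fun y _ => ?_
      rw [norm_mul, Complex.norm_real, mul_pow, Real.norm_eq_abs, sq_abs]
    rw [Finset.sum_congr rfl (fun i (_ : i ∈ Finset.univ) => h1 i), Finset.sum_comm]
    refine Finset.sum_le_sum fun y hy => ?_
    calc ∑ i : n, (b i y) ^ 2 * ‖v y‖ ^ 2 = (∑ i : n, (b i y) ^ 2) * ‖v y‖ ^ 2 :=
          (Finset.sum_mul _ _ _).symm
      _ ≤ 1 * ‖v y‖ ^ 2 := mul_le_mul_of_nonneg_right (hdiagb y hy) (sq_nonneg _)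
      _ = ‖v y‖ ^ 2 := one_mul _
  calc ‖∑ i : n, ⟪U i, E (V i)⟫‖ ≤ ∑ i : n, ‖(⟪U i, E (V i)⟫ : ℂ)‖ := norm_sum_le _ _
    _ ≤ ∑ i : n, ‖E‖ * (‖U i‖ * ‖V i‖) := by
        refine Finset.sum_le_sum fun i _ => ?_
        calc ‖(⟪U i, E (V i)⟫ : ℂ)‖ ≤ ‖U i‖ * ‖E (V i)‖ := norm_inner_le_norm _ _
          _ ≤ ‖U i‖ * (‖E‖ * ‖V i‖) := by gcongr; exact E.le_opNorm _
          _ = ‖E‖ * (‖U i‖ * ‖V i‖) := by ring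
    _ = ‖E‖ * ∑ i : n, ‖U i‖ * ‖V i‖ := by rw [Finset.mul_sum]
    _ ≤ ‖E‖ * (Real.sqrt (∑ i : n, ‖U i‖ ^ 2) * Real.sqrt (∑ i : n, ‖V i‖ ^ 2)) := by
        refine mul_le_mul_of_nonneg_left ?_ (norm_nonneg E)
        exact Real.sum_mul_le_sqrt_mul_sqrt _ _ _
    _ ≤ ‖E‖ * (Real.sqrt (∑ x ∈ F, ‖u x‖ ^ 2) * Real.sqrt (∑ y ∈ F, ‖v y‖ ^ 2)) := by
        refine mul_le_mul_of_nonneg_left ?_ (norm_nonneg E)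
        exact mul_le_mul (Real.sqrt_le_sqrt hUnorm) (Real.sqrt_le_sqrt hVnorm)
          (Real.sqrt_nonneg _) (Real.sqrt_nonneg _)

lemma pd_diag_nonneg {k : X → X → ℝ} (hpd : IsPosDefKernel k) (x : X) : 0 ≤ k x x := by
  classical
  have h := hpd {x} (fun _ => 1)
  simpa using h

lemma pd_abs_le {k : X → X → ℝ} (hpd : IsPosDefKernel k)
    (hsym : ∀ x y, k x y = k y x) (hdiag : ∀ x, k x x ≤ 1) (x y : X) : |k x y| ≤ 1 := by
  classical
  rcases eq_or_ne x y with rfl | hxy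
  · rw [abs_le]
    exact ⟨by linarith [pd_diag_nonneg hpd x], hdiag x⟩
  · have key : ∀ t : ℝ, 0 ≤ k x x + 2 * t * k x y + t * t * k y y := by
      intro t
      have h := hpd {x, y} (fun z => if z = x then 1 else if z = y then t else 0)
      rw [Finset.sum_pair hxy] at h
      rw [Finset.sum_pair hxy, Finset.sum_pair hxy] at h
      norm_num [hxy, Ne.symm hxy] at h
      rw [hsym y x] at h
      linarith [h]
    have h1 := key 1
    have h2 := key (-1)
    have hxx := hdiag x
    have hyy := hdiag y
    rw [abs_le]
    constructor <;> nlinarith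

def projOp (F : Finset X) : L2 X →L[ℂ] L2 X :=
  ∑ x ∈ F, ContinuousLinearMap.smulRight (innerSL ℂ (diracDelta x)) (diracDelta x)

lemma projOp_apply (F : Finset X) (g : L2 X) :
    projOp F g = fin2 F (fun x => g x) := by
  rw [projOp, fin2_eq_sum_smul, ContinuousLinearMap.sum_apply]
  refine Finset.sum_congr rfl fun x _ => ?_
  rw [ContinuousLinearMap.smulRight_apply, innerSL_apply_apply, inner_dirac]

lemma isCompactOperator_rankOne (x : X) :
    IsCompactOperator ⇑(ContinuousLinearMap.smulRight (innerSL ℂ (diracDelta x))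
      (diracDelta (X := X) x)) := by
  refine ⟨(fun c : ℂ => c • (diracDelta x : L2 X)) '' Metric.closedBall 0 1,
    (isCompact_closedBall (0:ℂ) 1).image (continuous_id.smul continuous_const), ?_⟩
  have hmem : (innerSL ℂ (diracDelta (X := X) x)) ⁻¹' Metric.closedBall 0 1 ∈
      nhds (0 : L2 X) := by
    have h0 : (innerSL ℂ (diracDelta (X := X) x)) 0 = 0 := map_zero _
    refine (innerSL ℂ (diracDelta (X := X) x)).continuous.continuousAt.preimage_mem_nhds ?_
    rw [h0]
    exact Metric.closedBall_mem_nhds 0 one_pos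
  refine Filter.mem_of_superset hmem fun f hf => ?_
  exact ⟨(innerSL ℂ (diracDelta (X := X) x)) f, hf, by
    rw [ContinuousLinearMap.smulRight_apply]⟩

lemma isCompactOperator_projOp (F : Finset X) : IsCompactOperator ⇑(projOp F) := by
  classical
  rw [projOp]
  refine Finset.sum_induction _
    (fun A : ((L2 X) →L[ℂ] (L2 X)) => IsCompactOperator ⇑A) (fun a b ha hb => ?_)
    (by exact isCompactOperator_zero)
    (fun x _ => ?_)
  · exact ha.add hb
  · exact isCompactOperator_rankOne x

lemma fin2_inter_add_sdiff [DecidableEq X] (s F : Finset X) (u : X → ℂ) :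
    fin2 s u = fin2 (s ∩ F) u + fin2 (s \ F) u := by
  classical
  rw [fin2, fin2, fin2]
  exact (Finset.sum_inter_add_sum_sdiff s F _).symm

lemma norm_fin2_mono {s s' : Finset X} (h : s ⊆ s') (u : X → ℂ) :
    ‖fin2 s u‖ ≤ ‖fin2 s' u‖ := by
  rw [norm_fin2, norm_fin2]
  exact Real.sqrt_le_sqrt (Finset.sum_le_sum_of_subset_of_nonneg h
    fun x _ _ => sq_nonneg _)

lemma inner_fin2_fin2 [DecidableEq X] (s F : Finset X) (u w : X → ℂ) :
    ⟪fin2 s u, fin2 F w⟫ = ∑ x ∈ s ∩ F, (starRingEnd ℂ) (u x) * w x := by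
  classical
  rw [inner_fin2_left]
  have h : ∀ x ∈ s, (starRingEnd ℂ) (u x) * (fin2 F w) x
      = if x ∈ F then (starRingEnd ℂ) (u x) * w x else 0 := by
    intro x _
    by_cases hx : x ∈ F
    · rw [if_pos hx, fin2_apply_mem hx]
    · rw [if_neg hx, fin2_apply_not_mem hx, mul_zero]
  rw [Finset.sum_congr rfl h, ← Finset.sum_filter, Finset.filter_mem_eq_inter]

lemma fin2_restrict [DecidableEq X] (F t : Finset X) (v : X → ℂ) :
    fin2 F (fun x => (fin2 t v) x) = fin2 (t ∩ F) v := by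
  classical
  apply lp.ext
  funext z
  by_cases hzF : z ∈ F
  · rw [fin2_apply_mem hzF]
    by_cases hzt : z ∈ t
    · rw [fin2_apply_mem hzt, fin2_apply_mem (Finset.mem_inter.mpr ⟨hzt, hzF⟩)]
    · rw [fin2_apply_not_mem hzt,
        fin2_apply_not_mem (fun h => hzt (Finset.mem_inter.mp h).1)]
  · rw [fin2_apply_not_mem hzF,
      fin2_apply_not_mem (fun h => hzF (Finset.mem_inter.mp h).2)]

section Main

variable [MetricSpace X]

set_option maxHeartbeats 1000000 in
lemma main_estimate (hbg : BoundedGeometry X) (hA : PropertyA X)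
    (T : L2 X →L[ℂ] L2 X) (hT : T ∈ UniformRoeAlgebra X) (hg : IsGhost T)
    {ε : ℝ} (hε : 0 < ε) :
    ∃ F : Finset X, ∀ (s t : Finset X) (u v : X → ℂ),
      (Disjoint s F ∨ Disjoint t F) →
      ‖⟪fin2 s u, T (fin2 t v)⟫‖ ≤ ε * (‖fin2 s u‖ * ‖fin2 t v‖) := by
  classical
  obtain ⟨k₀, hpd₀, hprop₀, hconv₀⟩ := hA
  -- symmetrize the kernels
  set k : ℕ → X → X → ℝ := fun n x y => (k₀ n x y + k₀ n y x) / 2 with hkdef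
  have hsym : ∀ n x y, k n x y = k n y x := by
    intro n x y; simp only [hkdef]; ring
  have hpd : ∀ n, IsPosDefKernel (k n) := by
    intro n s c
    have h := hpd₀ n s c
    have hcomm : ∑ x ∈ s, ∑ y ∈ s, c x * c y * k₀ n y x
        = ∑ x ∈ s, ∑ y ∈ s, c x * c y * k₀ n x y := by
      rw [Finset.sum_comm]
      exact Finset.sum_congr rfl fun x _ => Finset.sum_congr rfl fun y _ => by ring
    have hexp : ∑ x ∈ s, ∑ y ∈ s, c x * c y * k n x y
        = (∑ x ∈ s, ∑ y ∈ s, c x * c y * k₀ n x y) / 2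
          + (∑ x ∈ s, ∑ y ∈ s, c x * c y * k₀ n y x) / 2 := by
      rw [Finset.sum_div, Finset.sum_div, ← Finset.sum_add_distrib]
      refine Finset.sum_congr rfl fun x _ => ?_
      rw [Finset.sum_div, Finset.sum_div, ← Finset.sum_add_distrib]
      refine Finset.sum_congr rfl fun y _ => ?_
      simp only [hkdef]; ring
    rw [hexp, hcomm]
    linarith
  have hprop : ∀ n, ∃ r, ∀ x y, r < dist x y → k n x y = 0 := by
    intro n
    obtain ⟨r, hr⟩ := hprop₀ n
    refine ⟨r, fun x y hd => ?_⟩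
    simp only [hkdef]
    rw [hr x y hd, hr y x (by rwa [dist_comm])]
    ring
  have hconv : ∀ s : ℝ, 0 < s → ∀ ε' : ℝ, 0 < ε' → ∃ N : ℕ, ∀ n : ℕ, N < n →
      ∀ x y : X, dist x y < s → 1 - ε' ≤ k n x y ∧ k n x y ≤ 1 := by
    intro s hs ε' hε'
    obtain ⟨N, hN⟩ := hconv₀ s hs ε' hε'
    refine ⟨N, fun n hn x y hd => ?_⟩
    have h1 := hN n hn x y hd
    have h2 := hN n hn y x (by rwa [dist_comm])
    constructor
    · simp only [hkdef]; linarith [h1.1, h2.1]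
    · simp only [hkdef]; linarith [h1.2, h2.2]
  -- finite propagation approximant
  obtain ⟨S, hSmem, hdistTS⟩ := Metric.mem_closure_iff.mp hT (ε/8) (by positivity)
  obtain ⟨R, hR0, hSprop⟩ := hSmem
  set E := T - S with hEdef
  have hEnorm : ‖E‖ ≤ ε/8 := by
    rw [hEdef]
    rw [dist_eq_norm] at hdistTS
    linarith
  -- ball bound at radius R
  obtain ⟨NR, hNR⟩ := hbg (R+1) (by linarith)
  have hNR' : ∀ z : X, ∃ _ : (Metric.closedBall z R).Finite,
      (Metric.closedBall z R).ncard ≤ NR := by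
    intro z
    have hsub : Metric.closedBall z R ⊆ Metric.closedBall z (R+1) :=
      Metric.closedBall_subset_closedBall (by linarith)
    obtain ⟨hf, hc⟩ := hNR z
    exact ⟨hf.subset hsub, le_trans (Set.ncard_le_ncard hsub hf) hc⟩
  -- choose n
  set ε'' : ℝ := ε / (4 * ((NR:ℝ)+1) * (‖S‖+1)) with hε''def
  have hε''pos : 0 < ε'' := by
    rw [hε''def]
    have h1 : (0:ℝ) < (NR:ℝ) + 1 := by positivity
    have h2 : (0:ℝ) < ‖S‖ + 1 := by positivity
    positivity
  obtain ⟨N₁, hN₁⟩ := hconv (R+1) (by linarith) ε'' hε''pos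
  obtain ⟨N₂, hN₂⟩ := hconv 1 one_pos (1/2) (by norm_num)
  set n := max N₁ N₂ + 1 with hndef
  have hn₁ : N₁ < n := lt_of_le_of_lt (le_max_left _ _) (Nat.lt_succ_self _)
  have hn₂ : N₂ < n := lt_of_le_of_lt (le_max_right _ _) (Nat.lt_succ_self _)
  have hknear : ∀ x y : X, dist x y < R+1 → 1 - ε'' ≤ k n x y ∧ k n x y ≤ 1 :=
    hN₁ n hn₁
  have hkdiag : ∀ x : X, k n x x ≤ 1 := fun x =>
    (hN₂ n hn₂ x x (by rw [dist_self]; norm_num)).2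
  have hkabs : ∀ x y : X, |k n x y| ≤ 1 := pd_abs_le (hpd n) (hsym n) hkdiag
  obtain ⟨r, hrprop⟩ := hprop n
  set r' : ℝ := max r 0 with hr'def
  have hr'0 : (0:ℝ) ≤ r' := le_max_right _ _
  have hr' : ∀ x y : X, r' < dist x y → k n x y = 0 := fun x y hd =>
    hrprop x y (lt_of_le_of_lt (le_max_left _ _) hd)
  obtain ⟨Nr, hNrb⟩ := hbg (r'+1) (by linarith)
  have hNr' : ∀ z : X, ∃ _ : (Metric.closedBall z r').Finite,
      (Metric.closedBall z r').ncard ≤ Nr := by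
    intro z
    have hsub : Metric.closedBall z r' ⊆ Metric.closedBall z (r'+1) :=
      Metric.closedBall_subset_closedBall (by linarith)
    obtain ⟨hf, hc⟩ := hNrb z
    exact ⟨hf.subset hsub, le_trans (Set.ncard_le_ncard hsub hf) hc⟩
  set ε₂ : ℝ := ε / (4 * ((Nr:ℝ)+1)) with hε₂def
  have hε₂pos : 0 < ε₂ := by
    rw [hε₂def]
    have h1 : (0:ℝ) < (Nr:ℝ) + 1 := by positivity
    positivity
  obtain ⟨G, hG⟩ := hg ε₂ hε₂pos
  refine ⟨G, fun s t u v hdisj => ?_⟩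
  -- entrywise smallness of T on the relevant pairs
  have hghost : ∀ x ∈ s, ∀ y ∈ t, ‖matrixEntry T x y‖ ≤ ε₂ := by
    intro x hx y hy
    rcases hdisj with hd | hd
    · exact le_of_lt (hG x y (Or.inl (Finset.disjoint_left.mp hd hx)))
    · exact le_of_lt (hG x y (Or.inr (Finset.disjoint_left.mp hd hy)))
  -- the decomposition of the form into four pieces
  have key : ∀ x ∈ s, ∀ y ∈ t,
      (starRingEnd ℂ) (u x) * matrixEntry T x y * v y
      = ((starRingEnd ℂ) (u x) * (((1:ℂ) - ((k n x y : ℝ):ℂ)) * matrixEntry S x y) * v y)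
        + (((starRingEnd ℂ) (u x) * matrixEntry E x y * v y)
           - ((starRingEnd ℂ) (u x) * ((k n x y : ℝ):ℂ) * matrixEntry E x y * v y))
        + ((starRingEnd ℂ) (u x) * (((k n x y : ℝ):ℂ) * matrixEntry T x y) * v y) := by
    intro x _ y _
    rw [hEdef, matrixEntry_sub]
    ring
  have hsplit : ⟪fin2 s u, T (fin2 t v)⟫
      = (∑ x ∈ s, ∑ y ∈ t,
          (starRingEnd ℂ) (u x) * (((1:ℂ) - ((k n x y : ℝ):ℂ)) * matrixEntry S x y) * v y)
        + ((⟪fin2 s u, E (fin2 t v)⟫)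
           - (∑ x ∈ s, ∑ y ∈ t,
              (starRingEnd ℂ) (u x) * ((k n x y : ℝ):ℂ) * matrixEntry E x y * v y))
        + (∑ x ∈ s, ∑ y ∈ t,
            (starRingEnd ℂ) (u x) * (((k n x y : ℝ):ℂ) * matrixEntry T x y) * v y) := by
    rw [inner_fin2_T, inner_fin2_T]
    rw [Finset.sum_congr rfl (fun x hx => Finset.sum_congr rfl fun y hy => key x hx y hy)]
    simp only [Finset.sum_add_distrib, Finset.sum_sub_distrib]
  -- bound each piece
  set Su : ℝ := Real.sqrt (∑ x ∈ s, ‖u x‖ ^ 2) with hSu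
  set Sv : ℝ := Real.sqrt (∑ y ∈ t, ‖v y‖ ^ 2) with hSv
  have hSu0 : 0 ≤ Su := Real.sqrt_nonneg _
  have hSv0 : 0 ≤ Sv := Real.sqrt_nonneg _
  -- piece 1
  have hb1 : ‖∑ x ∈ s, ∑ y ∈ t,
      (starRingEnd ℂ) (u x) * (((1:ℂ) - ((k n x y : ℝ):ℂ)) * matrixEntry S x y) * v y‖
      ≤ (NR:ℝ) * (ε'' * ‖S‖) * (Su * Sv) := by
    refine key_sum_bound hNR' (by positivity) _ s t u v ?_ ?_
    · intro x _ y _ hd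
      rw [hSprop x y hd, mul_zero]
    · intro x _ y _ hd
      rw [norm_mul]
      have hd' : dist x y < R + 1 := by linarith
      have hk1 := hknear x y hd'
      have h1k : ‖(1:ℂ) - ((k n x y : ℝ):ℂ)‖ ≤ ε'' := by
        have hcast : (1:ℂ) - ((k n x y : ℝ):ℂ) = ((1 - k n x y : ℝ):ℂ) := by push_cast; ring
        rw [hcast, Complex.norm_real, Real.norm_eq_abs, abs_of_nonneg (by linarith [hk1.2])]
        linarith [hk1.1]
      exact mul_le_mul h1k (norm_matrixEntry_le S x y) (norm_nonneg _) (le_of_lt hε''pos)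
  -- piece 2
  have hb2 : ‖⟪fin2 s u, E (fin2 t v)⟫‖ ≤ (ε/8) * (Su * Sv) := by
    calc ‖⟪fin2 s u, E (fin2 t v)⟫‖ ≤ ‖fin2 s u‖ * ‖E (fin2 t v)‖ := norm_inner_le_norm _ _
      _ ≤ ‖fin2 s u‖ * (‖E‖ * ‖fin2 t v‖) := by gcongr; exact E.le_opNorm _
      _ ≤ ‖fin2 s u‖ * ((ε/8) * ‖fin2 t v‖) := by gcongr
      _ = (ε/8) * (Su * Sv) := by rw [norm_fin2, norm_fin2, ← hSu, ← hSv]; ring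
  -- piece 3 : the Schur multiplier bound via the Gram factorization
  have hb3 : ‖∑ x ∈ s, ∑ y ∈ t,
      (starRingEnd ℂ) (u x) * ((k n x y : ℝ):ℂ) * matrixEntry E x y * v y‖
      ≤ (ε/8) * (Su * Sv) := by
    set u' : X → ℂ := fun x => if x ∈ s then u x else 0 with hu'
    set v' : X → ℂ := fun y => if y ∈ t then v y else 0 with hv'
    have hext : ∑ x ∈ s ∪ t, ∑ y ∈ s ∪ t,
        (starRingEnd ℂ) (u' x) * ((k n x y : ℝ):ℂ) * matrixEntry E x y * v' y
        = ∑ x ∈ s, ∑ y ∈ t,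
          (starRingEnd ℂ) (u x) * ((k n x y : ℝ):ℂ) * matrixEntry E x y * v y := by
      rw [← Finset.sum_subset (Finset.subset_union_left (s₁ := s) (s₂ := t))]
      · refine Finset.sum_congr rfl fun x hx => ?_
        rw [← Finset.sum_subset (Finset.subset_union_right (s₁ := s) (s₂ := t))]
        · refine Finset.sum_congr rfl fun y hy => ?_
          rw [hu', hv']
          simp only [if_pos hx, if_pos hy]
        · intro y _ hy
          rw [hv']
          simp only [if_neg hy, mul_zero]
      · intro x _ hx
        refine Finset.sum_eq_zero fun y _ => ?_
        rw [hu']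
        simp only [if_neg hx, map_zero, zero_mul]
    have hgram := gram_bound (k n) (hpd n) (hsym n) hkdiag E (s ∪ t) u' v'
    rw [hext] at hgram
    have hus : ∑ x ∈ s ∪ t, ‖u' x‖ ^ 2 = ∑ x ∈ s, ‖u x‖ ^ 2 := by
      rw [← Finset.sum_subset (Finset.subset_union_left (s₁ := s) (s₂ := t))]
      · refine Finset.sum_congr rfl fun x hx => ?_
        rw [hu']
        simp only [if_pos hx]
      · intro x _ hx
        rw [hu']
        simp only [if_neg hx, norm_zero]
        norm_num
    have hvs : ∑ y ∈ s ∪ t, ‖v' y‖ ^ 2 = ∑ y ∈ t, ‖v y‖ ^ 2 := by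
      rw [← Finset.sum_subset (Finset.subset_union_right (s₁ := s) (s₂ := t))]
      · refine Finset.sum_congr rfl fun y hy => ?_
        rw [hv']
        simp only [if_pos hy]
      · intro y _ hy
        rw [hv']
        simp only [if_neg hy, norm_zero]
        norm_num
    rw [hus, hvs, ← hSu, ← hSv] at hgram
    calc ‖∑ x ∈ s, ∑ y ∈ t,
        (starRingEnd ℂ) (u x) * ((k n x y : ℝ):ℂ) * matrixEntry E x y * v y‖
        ≤ ‖E‖ * (Su * Sv) := hgram
      _ ≤ (ε/8) * (Su * Sv) := by
          exact mul_le_mul_of_nonneg_right hEnorm (by positivity)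
  -- piece 4
  have hb4 : ‖∑ x ∈ s, ∑ y ∈ t,
      (starRingEnd ℂ) (u x) * (((k n x y : ℝ):ℂ) * matrixEntry T x y) * v y‖
      ≤ (Nr:ℝ) * ε₂ * (Su * Sv) := by
    refine key_sum_bound hNr' (le_of_lt hε₂pos) _ s t u v ?_ ?_
    · intro x _ y _ hd
      rw [hr' x y hd]
      norm_num
    · intro x hx y hy _
      rw [norm_mul]
      have h1 : ‖((k n x y : ℝ):ℂ)‖ ≤ 1 := by
        rw [Complex.norm_real, Real.norm_eq_abs]
        exact hkabs x y
      have h2 := hghost x hx y hy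
      calc ‖((k n x y : ℝ):ℂ)‖ * ‖matrixEntry T x y‖ ≤ 1 * ε₂ :=
            mul_le_mul h1 h2 (norm_nonneg _) zero_le_one
        _ = ε₂ := one_mul _
  -- combine
  have hfinal : ‖⟪fin2 s u, T (fin2 t v)⟫‖
      ≤ (NR:ℝ) * (ε'' * ‖S‖) * (Su * Sv) + ((ε/8) * (Su * Sv) + (ε/8) * (Su * Sv))
        + (Nr:ℝ) * ε₂ * (Su * Sv) := by
    rw [hsplit]
    refine le_trans (norm_add_le _ _) ?_
    refine add_le_add (le_trans (norm_add_le _ _) (add_le_add hb1 ?_)) hb4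
    exact le_trans (norm_sub_le _ _) (add_le_add hb2 hb3)
  have hc1 : (NR:ℝ) * (ε'' * ‖S‖) ≤ ε/4 := by
    have hden : (0:ℝ) < 4 * ((NR:ℝ)+1) * (‖S‖+1) := by positivity
    have hmul : ε'' * (4 * ((NR:ℝ)+1) * (‖S‖+1)) = ε := by
      rw [hε''def]
      exact div_mul_cancel₀ ε hden.ne'
    have hN0 : (0:ℝ) ≤ (NR:ℝ) := Nat.cast_nonneg _
    have hS0 : (0:ℝ) ≤ ‖S‖ := norm_nonneg _
    nlinarith [hε''pos, hmul, hN0, hS0, mul_nonneg hN0 hS0]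
  have hc4 : (Nr:ℝ) * ε₂ ≤ ε/4 := by
    have hden : (0:ℝ) < 4 * ((Nr:ℝ)+1) := by positivity
    have hmul : ε₂ * (4 * ((Nr:ℝ)+1)) = ε := by
      rw [hε₂def]
      exact div_mul_cancel₀ ε hden.ne'
    have hN0 : (0:ℝ) ≤ (Nr:ℝ) := Nat.cast_nonneg _
    nlinarith [hε₂pos, hmul, hN0]
  have hSS : 0 ≤ Su * Sv := mul_nonneg hSu0 hSv0
  have hnorms : ‖fin2 s u‖ * ‖fin2 t v‖ = Su * Sv := by
    rw [norm_fin2, norm_fin2, ← hSu, ← hSv]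
  rw [hnorms]
  calc ‖⟪fin2 s u, T (fin2 t v)⟫‖
      ≤ (NR:ℝ) * (ε'' * ‖S‖) * (Su * Sv) + ((ε/8) * (Su * Sv) + (ε/8) * (Su * Sv))
        + (Nr:ℝ) * ε₂ * (Su * Sv) := hfinal
    _ ≤ (ε/4) * (Su * Sv) + ((ε/8) * (Su * Sv) + (ε/8) * (Su * Sv))
        + (ε/4) * (Su * Sv) := by
        refine add_le_add (add_le_add (mul_le_mul_of_nonneg_right hc1 hSS) le_rfl)
          (mul_le_mul_of_nonneg_right hc4 hSS)
    _ ≤ ε * (Su * Sv) := by nlinarith [hSS, hε]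

lemma exists_compact_approx (hbg : BoundedGeometry X) (hA : PropertyA X)
    (T : L2 X →L[ℂ] L2 X) (hT : T ∈ UniformRoeAlgebra X) (hg : IsGhost T)
    {ε : ℝ} (hε : 0 < ε) :
    ∃ C : L2 X →L[ℂ] L2 X, IsCompactOperator ⇑C ∧ ‖T - C‖ ≤ ε := by
  classical
  obtain ⟨F, hF⟩ := main_estimate hbg hA T hT hg (half_pos hε)
  refine ⟨projOp F ∘L T ∘L projOp F, ?_, ?_⟩
  · rw [ContinuousLinearMap.coe_comp']
    exact (isCompactOperator_projOp F).comp_clm (T ∘L projOp F)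
  · refine norm_le_of_forms _ (le_of_lt hε) fun s t u v => ?_
    have hC : ⟪fin2 s u, (projOp F ∘L T ∘L projOp F) (fin2 t v)⟫
        = ⟪fin2 (s ∩ F) u, T (fin2 (t ∩ F) v)⟫ := by
      rw [ContinuousLinearMap.comp_apply, ContinuousLinearMap.comp_apply]
      rw [projOp_apply (g := fin2 t v), fin2_restrict]
      rw [projOp_apply]
      rw [inner_fin2_fin2, inner_fin2_left]
    have hsub : ⟪fin2 s u, (T - (projOp F ∘L T ∘L projOp F)) (fin2 t v)⟫
        = ⟪fin2 s u, T (fin2 t v)⟫ - ⟪fin2 (s ∩ F) u, T (fin2 (t ∩ F) v)⟫ := by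
      rw [ContinuousLinearMap.sub_apply, inner_sub_right, hC]
    have h1 : (⟪fin2 s u, T (fin2 t v)⟫ : ℂ)
        = ⟪fin2 (s ∩ F) u, T (fin2 t v)⟫ + ⟪fin2 (s \ F) u, T (fin2 t v)⟫ := by
      rw [fin2_inter_add_sdiff s F u, inner_add_left]
    have h2 : (⟪fin2 (s ∩ F) u, T (fin2 t v)⟫ : ℂ)
        = ⟪fin2 (s ∩ F) u, T (fin2 (t ∩ F) v)⟫
          + ⟪fin2 (s ∩ F) u, T (fin2 (t \ F) v)⟫ := by
      rw [fin2_inter_add_sdiff t F v, map_add, inner_add_right]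
    have hdecomp : ⟪fin2 s u, (T - (projOp F ∘L T ∘L projOp F)) (fin2 t v)⟫
        = ⟪fin2 (s \ F) u, T (fin2 t v)⟫ + ⟪fin2 (s ∩ F) u, T (fin2 (t \ F) v)⟫ := by
      rw [hsub, h1, h2]; ring
    rw [hdecomp]
    have e1 := hF (s \ F) t u v (Or.inl Finset.sdiff_disjoint)
    have e2 := hF (s ∩ F) (t \ F) u v (Or.inr Finset.sdiff_disjoint)
    have m1 : ‖fin2 (s \ F) u‖ * ‖fin2 t v‖ ≤ ‖fin2 s u‖ * ‖fin2 t v‖ :=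
      mul_le_mul_of_nonneg_right (norm_fin2_mono Finset.sdiff_subset u) (norm_nonneg _)
    have m2 : ‖fin2 (s ∩ F) u‖ * ‖fin2 (t \ F) v‖ ≤ ‖fin2 s u‖ * ‖fin2 t v‖ :=
      mul_le_mul (norm_fin2_mono Finset.inter_subset_left u)
        (norm_fin2_mono Finset.sdiff_subset v) (norm_nonneg _) (norm_nonneg _)
    have hhalf : (0:ℝ) ≤ ε / 2 := by positivity
    calc ‖(⟪fin2 (s \ F) u, T (fin2 t v)⟫ : ℂ)
          + ⟪fin2 (s ∩ F) u, T (fin2 (t \ F) v)⟫‖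
        ≤ ‖(⟪fin2 (s \ F) u, T (fin2 t v)⟫ : ℂ)‖
          + ‖(⟪fin2 (s ∩ F) u, T (fin2 (t \ F) v)⟫ : ℂ)‖ := norm_add_le _ _
      _ ≤ ε / 2 * (‖fin2 (s \ F) u‖ * ‖fin2 t v‖)
          + ε / 2 * (‖fin2 (s ∩ F) u‖ * ‖fin2 (t \ F) v‖) := add_le_add e1 e2
      _ ≤ ε / 2 * (‖fin2 s u‖ * ‖fin2 t v‖) + ε / 2 * (‖fin2 s u‖ * ‖fin2 t v‖) :=
          add_le_add (mul_le_mul_of_nonneg_left m1 hhalf)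
            (mul_le_mul_of_nonneg_left m2 hhalf)
      _ = ε * ‖fin2 s u‖ * ‖fin2 t v‖ := by ring

end Main

end GhostAux

/-- On a bounded geometry space with property A, all ghost operators in the uniform Roe
algebra are compact. -/
theorem ghosts_compact_of_propertyA (X : Type*) [MetricSpace X] (hbg : BoundedGeometry X)
    (hA : PropertyA X) :
    ∀ T : L2 X →L[ℂ] L2 X, T ∈ UniformRoeAlgebra X → IsGhost T → IsCompactOperator ⇑T := by
  intro T hT hg
  have hpos : ∀ m : ℕ, (0:ℝ) < 1/((m:ℝ)+1) := fun m => by positivity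
  choose C hcpt hnorm using fun m : ℕ =>
    GhostAux.exists_compact_approx hbg hA T hT hg (hpos m)
  have htt : Filter.Tendsto C Filter.atTop (nhds T) := by
    rw [tendsto_iff_norm_sub_tendsto_zero]
    refine squeeze_zero (fun m => norm_nonneg _) (fun m => ?_)
      tendsto_one_div_add_atTop_nhds_zero_nat
    rw [norm_sub_rev]
    exact hnorm m
  exact isCompactOperator_of_tendsto htt (Filter.Eventually.of_forall hcpt)
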